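/- (Simplified entropy bounds for a uniform, zero-mean Gaussian mixture.) Suppose f_A(a) = (1/L) Σ_{l=1}^L f_l(a) where each f_l is the density of CN(0, σ_l²). Then the entropy h(A) satisfies h(A) ≥ log₂(π L) − (1/L) Σ_{l=1}^L log₂( Σ_{t=1}^L 1/(σ_l² + σ_t²) ) and h(A) ≤ log₂(π e L) + (1/L) Σ_{l=1}^L log₂(σ_l²). -/

import Mathlib

open MeasureTheory Real

lemma eaux_integrable_gauss {b : ℝ} (hb : 0 < b) :
    Integrable (fun a : ℂ => rexp (-b * ‖a‖^2)) := by
  have := (GaussianFourier.integrable_cexp_neg_mul_sq_norm_add (V := ℂ) (b := (b:ℂ))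
    (by simpa using hb) 0 0).norm
  simp only [Complex.norm_exp] at this
  convert this using 2 with a
  simp [← Complex.ofReal_pow]

lemma eaux_integral_gauss {b : ℝ} (hb : 0 < b) :
    ∫ a : ℂ, rexp (-b * ‖a‖^2) = π / b := by
  rw [GaussianFourier.integral_rexp_neg_mul_sq_norm hb, Complex.finrank_real_complex]
  norm_num

lemma eaux_integrable_sq_gauss {b : ℝ} (hb : 0 < b) :
    Integrable (fun a : ℂ => ‖a‖^2 * rexp (-b * ‖a‖^2)) := by
  have hmeas : AEStronglyMeasurable (fun a : ℂ => ‖a‖^2 * rexp (-b * ‖a‖^2)) volume := by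
    exact ((continuous_norm.pow 2).mul
      ((continuous_const.mul (continuous_norm.pow 2)).rexp)).aestronglyMeasurable
  refine Integrable.mono' ((eaux_integrable_gauss (half_pos hb)).const_mul (2/b)) hmeas ?_
  filter_upwards with a
  have hr : (0:ℝ) ≤ ‖a‖^2 := by positivity
  have h1 : ‖a‖^2 * rexp (-b * ‖a‖^2) = (‖a‖^2 * rexp (-(b/2) * ‖a‖^2)) * rexp (-(b/2) * ‖a‖^2) := by
    rw [mul_assoc, ← Real.exp_add]; ring_nf
  have h2 : ‖a‖^2 * rexp (-(b/2) * ‖a‖^2) ≤ 2 / b := by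
    rcases eq_or_lt_of_le hr with h | h
    · rw [← h]; simp; positivity
    · have hexp : (b/2) * ‖a‖^2 ≤ rexp ((b/2) * ‖a‖^2) := by
        have := Real.add_one_le_exp ((b/2) * ‖a‖^2)
        nlinarith
      have h3 : (b/2) * (‖a‖^2 * rexp (-(b/2) * ‖a‖^2)) ≤ 1 := by
        calc (b/2) * (‖a‖^2 * rexp (-(b/2) * ‖a‖^2))
            = ((b/2) * ‖a‖^2) * rexp (-(b/2) * ‖a‖^2) := by ring
          _ ≤ rexp ((b/2) * ‖a‖^2) * rexp (-(b/2) * ‖a‖^2) :=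
              mul_le_mul_of_nonneg_right hexp (Real.exp_pos _).le
          _ = 1 := by rw [← Real.exp_add]; norm_num
      rw [le_div_iff₀ hb]
      nlinarith [h3]
  rw [Real.norm_eq_abs, abs_of_nonneg (by positivity)]
  calc ‖a‖^2 * rexp (-b * ‖a‖^2) = (‖a‖^2 * rexp (-(b/2) * ‖a‖^2)) * rexp (-(b/2) * ‖a‖^2) := h1
    _ ≤ (2/b) * rexp (-(b/2) * ‖a‖^2) :=
        mul_le_mul_of_nonneg_right h2 (Real.exp_pos _).le

lemma eaux_integral_sq_gauss {b : ℝ} (hb : 0 < b) :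
    ∫ a : ℂ, ‖a‖^2 * rexp (-b * ‖a‖^2) = π / b^2 := by
  have key := hasDerivAt_integral_of_dominated_loc_of_deriv_le (μ := (volume : Measure ℂ))
      (x₀ := b) (s := Metric.ball b (b/2))
      (F := fun c (a:ℂ) => rexp (-c * ‖a‖^2))
      (F' := fun c (a:ℂ) => -(‖a‖^2 * rexp (-c * ‖a‖^2)))
      (bound := fun a : ℂ => ‖a‖^2 * rexp (-(b/2) * ‖a‖^2))
      (Metric.ball_mem_nhds b (half_pos hb))
      (Filter.Eventually.of_forall fun c =>
        ((continuous_const.mul (continuous_norm.pow 2)).rexp).aestronglyMeasurable)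
      (eaux_integrable_gauss hb)
      (((continuous_norm.pow 2).mul
        ((continuous_const.mul (continuous_norm.pow 2)).rexp)).neg.aestronglyMeasurable)
      ?_ (eaux_integrable_sq_gauss (half_pos hb)) ?_
  · have hD : HasDerivAt (fun c => ∫ a : ℂ, rexp (-c * ‖a‖^2))
        (∫ a : ℂ, -(‖a‖^2 * rexp (-b * ‖a‖^2))) b := key.2
    have hEq : (fun c => ∫ a : ℂ, rexp (-c * ‖a‖^2)) =ᶠ[nhds b] (fun c => π / c) := by
      filter_upwards [eventually_gt_nhds hb] with c hc
      exact eaux_integral_gauss hc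
    have hD2 : HasDerivAt (fun c => π / c) (∫ a : ℂ, -(‖a‖^2 * rexp (-b * ‖a‖^2))) b :=
      hD.congr_of_eventuallyEq hEq.symm
    have hD3 : HasDerivAt (fun c => π / c) (-(π / b^2)) b := by
      simpa [div_eq_mul_inv] using (hasDerivAt_inv (ne_of_gt hb)).const_mul π
    have := hD2.unique hD3
    rw [integral_neg] at this
    linarith
  · filter_upwards with a c hc
    rw [Real.norm_eq_abs, abs_neg, abs_of_nonneg (by positivity)]
    have hc' : b/2 ≤ c := by
      rw [Metric.mem_ball, Real.dist_eq, abs_lt] at hc; linarith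
    have : rexp (-c * ‖a‖^2) ≤ rexp (-(b/2) * ‖a‖^2) := by
      apply Real.exp_le_exp.mpr; nlinarith [sq_nonneg ‖a‖]
    exact mul_le_mul_of_nonneg_left this (by positivity)
  · filter_upwards with a c _
    have : HasDerivAt (fun c : ℝ => -c * ‖a‖^2) (-‖a‖^2) c := by
      simpa using ((hasDerivAt_id c).neg.mul_const (‖a‖^2))
    simpa [mul_comm] using this.exp

/-- Simplified entropy bounds for a uniform, zero-mean complex Gaussian mixture. -/
theorem entropy_uniform_gaussian_mixture_bounds
    (L : ℕ) (hL : 0 < L) (σ : Fin L → ℝ) (hσ : ∀ l, 0 < σ l)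
    (f : Fin L → ℂ → ℝ)
    (hf : ∀ l a, f l a = (π * σ l)⁻¹ * Real.exp (-(‖a‖) ^ 2 / σ l))
    (fA : ℂ → ℝ) (hfA : ∀ a, fA a = (1 / L) * ∑ l, f l a) :
    (-∫ a : ℂ, fA a * Real.logb 2 (fA a)) ≥
        Real.logb 2 (π * L) - (1 / L) * ∑ l, Real.logb 2 (∑ t, 1 / (σ l + σ t)) ∧
      (-∫ a : ℂ, fA a * Real.logb 2 (fA a)) ≤
        Real.logb 2 (π * Real.exp 1 * L) + (1 / L) * ∑ l, Real.logb 2 (σ l) := by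
  have hLR : (0:ℝ) < L := Nat.cast_pos.mpr hL
  have hbl : ∀ l, 0 < (σ l)⁻¹ := fun l => inv_pos.mpr (hσ l)
  have hf' : ∀ l a, f l a = (π * σ l)⁻¹ * rexp (-(σ l)⁻¹ * ‖a‖^2) := by
    intro l a; rw [hf]; congr 1
    ring
  have hfpos : ∀ l a, 0 < f l a := fun l a => by
    have h1 := pi_pos; have h2 := hσ l
    rw [hf' l a]; positivity
  have hfApos : ∀ a, 0 < fA a := fun a => by
    rw [hfA]
    exact mul_pos (by positivity)
      (Finset.sum_pos (fun l _ => hfpos l a) ⟨⟨0, hL⟩, Finset.mem_univ _⟩)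
  have hfcont : ∀ l, Continuous (f l) := by
    intro l
    rw [funext (hf' l)]
    exact continuous_const.mul ((continuous_const.mul (continuous_norm.pow 2)).rexp)
  have hlogcont : Continuous fun a => Real.log (fA a) := by
    have hfAcont : Continuous fA := by
      rw [funext hfA]
      exact continuous_const.mul (continuous_finset_sum _ (fun l _ => (hfcont l)))
    exact continuous_iff_continuousAt.mpr fun a =>
      (hfAcont.continuousAt).log (ne_of_gt (hfApos a))
  have hfint : ∀ l, Integrable (f l) := fun l => by
    rw [funext (hf' l)]; exact (eaux_integrable_gauss (hbl l)).const_mul _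
  have hfone : ∀ l, ∫ a : ℂ, f l a = 1 := fun l => by
    rw [funext (hf' l), integral_const_mul, eaux_integral_gauss (hbl l)]
    have h1 : π ≠ 0 := pi_ne_zero
    have h2 : σ l ≠ 0 := ne_of_gt (hσ l)
    field_simp
  -- products
  have hsumpos : ∀ l t : Fin L, 0 < (σ l)⁻¹ + (σ t)⁻¹ := fun l t =>
    add_pos (hbl l) (hbl t)
  have hprod : ∀ l t : Fin L, (fun a : ℂ => f l a * f t a) =
      fun a => ((π * σ l)⁻¹ * (π * σ t)⁻¹) * rexp (-((σ l)⁻¹ + (σ t)⁻¹) * ‖a‖^2) := by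
    intro l t; funext a
    calc f l a * f t a
        = ((π*σ l)⁻¹ * (π*σ t)⁻¹) * (rexp (-(σ l)⁻¹*‖a‖^2) * rexp (-(σ t)⁻¹*‖a‖^2)) := by
          rw [hf' l a, hf' t a]; ring
      _ = ((π*σ l)⁻¹ * (π*σ t)⁻¹) * rexp (-((σ l)⁻¹ + (σ t)⁻¹) * ‖a‖^2) := by
          rw [← Real.exp_add]; congr 1; ring
  have hprodint : ∀ l t : Fin L, Integrable (fun a : ℂ => f l a * f t a) := fun l t => by
    rw [hprod l t]; exact (eaux_integrable_gauss (hsumpos l t)).const_mul _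
  have hprodval : ∀ l t : Fin L, ∫ a : ℂ, f l a * f t a = (π * (σ l + σ t))⁻¹ := fun l t => by
    rw [hprod l t, integral_const_mul, eaux_integral_gauss (hsumpos l t)]
    have h1 : π ≠ 0 := pi_ne_zero
    have h2 : σ l ≠ 0 := ne_of_gt (hσ l)
    have h3 : σ t ≠ 0 := ne_of_gt (hσ t)
    have h4 : σ l + σ t ≠ 0 := ne_of_gt (add_pos (hσ l) (hσ t))
    have h5 : (σ l)⁻¹ + (σ t)⁻¹ = (σ l + σ t) / (σ l * σ t) := by
      field_simp
      ring
    rw [h5, div_div_eq_mul_div]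
    field_simp
  -- f l * fA
  have hflfA : ∀ l, (fun a : ℂ => f l a * fA a) =
      (fun a : ℂ => (1/(L:ℝ)) * ∑ t, f l a * f t a) := by
    intro l; funext a
    rw [hfA, mul_left_comm, Finset.mul_sum]
  have hflfAint : ∀ l, Integrable (fun a : ℂ => f l a * fA a) := fun l => by
    rw [hflfA l]
    exact (integrable_finset_sum _ (fun t _ => hprodint l t)).const_mul _
  set S : Fin L → ℝ := fun l => ∑ t, (π * (σ l + σ t))⁻¹ with hS
  have hSpos : ∀ l, 0 < S l := fun l =>
    Finset.sum_pos (fun t _ => inv_pos.mpr (mul_pos pi_pos (add_pos (hσ l) (hσ t))))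
      ⟨⟨0, hL⟩, Finset.mem_univ _⟩
  have hflfAval : ∀ l, ∫ a : ℂ, f l a * fA a = (1/(L:ℝ)) * S l := fun l => by
    rw [hflfA l, integral_const_mul, integral_finset_sum _ (fun t _ => hprodint l t)]
    simp_rw [hprodval]
    rfl
  -- bounds on log fA
  set l₀ : Fin L := ⟨0, hL⟩
  set K : ℝ := (1/(L:ℝ)) * ∑ l, (π * σ l)⁻¹ with hK
  have hKpos : 0 < K :=
    mul_pos (by positivity) (Finset.sum_pos
      (fun l _ => inv_pos.mpr (mul_pos pi_pos (hσ l))) ⟨l₀, Finset.mem_univ _⟩)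
  have hfA_le : ∀ a, fA a ≤ K := by
    intro a; rw [hfA, hK]
    have hterm : ∀ l : Fin L, f l a ≤ (π * σ l)⁻¹ := by
      intro l
      rw [hf' l a]
      exact mul_le_of_le_one_right (inv_pos.mpr (mul_pos pi_pos (hσ l))).le
        (Real.exp_le_one_iff.mpr (by nlinarith [sq_nonneg ‖a‖, hbl l]))
    exact mul_le_mul_of_nonneg_left (Finset.sum_le_sum fun l _ => hterm l) (by positivity)
  set m : ℝ := (1/(L:ℝ)) * (π * σ l₀)⁻¹ with hm
  have hmpos : 0 < m := mul_pos (one_div_pos.mpr hLR) (inv_pos.mpr (mul_pos pi_pos (hσ l₀)))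
  set cc : ℝ := (σ l₀)⁻¹ with hcc
  have hfA_ge : ∀ a, m * rexp (-cc * ‖a‖^2) ≤ fA a := by
    intro a
    have h1 : f l₀ a ≤ ∑ l, f l a :=
      Finset.single_le_sum (fun l _ => (hfpos l a).le) (Finset.mem_univ l₀)
    have h2 : m * rexp (-cc * ‖a‖^2) = (1/(L:ℝ)) * f l₀ a := by
      rw [hf' l₀ a, hm, hcc]; ring
    rw [h2, hfA]
    exact mul_le_mul_of_nonneg_left h1 (by positivity)
  have hlog_le : ∀ a, Real.log (fA a) ≤ Real.log K := fun a =>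
    Real.log_le_log (hfApos a) (hfA_le a)
  have hlog_ge : ∀ a, Real.log m - cc * ‖a‖^2 ≤ Real.log (fA a) := by
    intro a
    calc Real.log m - cc * ‖a‖^2
        = Real.log (m * rexp (-cc * ‖a‖^2)) := by
          rw [Real.log_mul (ne_of_gt hmpos) (Real.exp_ne_zero _), Real.log_exp]; ring
      _ ≤ Real.log (fA a) := Real.log_le_log (by positivity) (hfA_ge a)
  set C : ℝ := |Real.log K| + |Real.log m| with hC
  have habs : ∀ a, |Real.log (fA a)| ≤ C + cc * ‖a‖^2 := by
    intro a
    have hccx : 0 ≤ cc * ‖a‖^2 := mul_nonneg (hbl l₀).le (sq_nonneg _)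
    rw [abs_le]; constructor
    · have := hlog_ge a
      have h1 : -|Real.log m| ≤ Real.log m := neg_abs_le _
      have h2 : 0 ≤ |Real.log K| := abs_nonneg _
      rw [hC]; linarith
    · have := hlog_le a
      have h1 : Real.log K ≤ |Real.log K| := le_abs_self _
      have h2 : 0 ≤ |Real.log m| := abs_nonneg _
      rw [hC]; linarith
  -- integrability of f l * log fA
  have hintI : ∀ l, Integrable (fun a : ℂ => f l a * Real.log (fA a)) := by
    intro l
    have hmeas : AEStronglyMeasurable (fun a : ℂ => f l a * Real.log (fA a)) volume :=
      ((hfcont l).mul hlogcont).aestronglyMeasurable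
    refine Integrable.mono'
      (((eaux_integrable_gauss (hbl l)).const_mul ((π*σ l)⁻¹ * C)).add
        ((eaux_integrable_sq_gauss (hbl l)).const_mul ((π*σ l)⁻¹ * cc))) hmeas ?_
    filter_upwards with a
    simp only [Pi.add_apply]
    rw [Real.norm_eq_abs, abs_mul, abs_of_nonneg (hfpos l a).le]
    calc f l a * |Real.log (fA a)| ≤ f l a * (C + cc * ‖a‖^2) :=
          mul_le_mul_of_nonneg_left (habs a) (hfpos l a).le
      _ = (π*σ l)⁻¹ * C * rexp (-(σ l)⁻¹*‖a‖^2)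
          + (π*σ l)⁻¹ * cc * (‖a‖^2 * rexp (-(σ l)⁻¹*‖a‖^2)) := by rw [hf' l a]; ring
  -- decomposition of G
  have hGdecomp : ∫ a : ℂ, fA a * Real.log (fA a)
      = (1/(L:ℝ)) * ∑ l, ∫ a : ℂ, f l a * Real.log (fA a) := by
    have h1 : (fun a : ℂ => fA a * Real.log (fA a))
        = fun a => (1/(L:ℝ)) * ∑ l, f l a * Real.log (fA a) := by
      funext a; rw [hfA, mul_assoc, Finset.sum_mul]
    rw [h1, integral_const_mul, integral_finset_sum _ (fun l _ => hintI l)]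
  -- lower bound on entropy: I l ≤ log ((1/L) * S l)
  have hIle : ∀ l, ∫ a : ℂ, f l a * Real.log (fA a) ≤ Real.log ((1/(L:ℝ)) * S l) := by
    intro l
    set c : ℝ := (1/(L:ℝ)) * S l with hc
    have hcpos : 0 < c := mul_pos (by positivity) (hSpos l)
    have hmono : ∀ a : ℂ, f l a * Real.log (fA a)
        ≤ c⁻¹ * (f l a * fA a) + (Real.log c - 1) * f l a := by
      intro a
      have h1 : Real.log (fA a) - Real.log c ≤ fA a / c - 1 := by
        rw [← Real.log_div (ne_of_gt (hfApos a)) (ne_of_gt hcpos)]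
        exact Real.log_le_sub_one_of_pos (div_pos (hfApos a) hcpos)
      rw [div_eq_inv_mul] at h1
      have h2 : Real.log (fA a) ≤ c⁻¹ * fA a + (Real.log c - 1) := by linarith
      calc f l a * Real.log (fA a) ≤ f l a * (c⁻¹ * fA a + (Real.log c - 1)) :=
            mul_le_mul_of_nonneg_left h2 (hfpos l a).le
        _ = c⁻¹ * (f l a * fA a) + (Real.log c - 1) * f l a := by ring
    have hint2 : Integrable (fun a : ℂ => c⁻¹ * (f l a * fA a) + (Real.log c - 1) * f l a) :=
      ((hflfAint l).const_mul _).add ((hfint l).const_mul _)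
    have hle := integral_mono (hintI l) hint2 hmono
    rw [integral_add ((hflfAint l).const_mul _) ((hfint l).const_mul _),
      integral_const_mul, integral_const_mul, hflfAval l, hfone l] at hle
    rw [← hc] at hle
    have h3 : c⁻¹ * c = 1 := inv_mul_cancel₀ (ne_of_gt hcpos)
    calc ∫ a : ℂ, f l a * Real.log (fA a) ≤ c⁻¹ * c + (Real.log c - 1) * 1 := hle
      _ = Real.log c := by rw [h3]; ring
  -- upper bound on entropy: I l ≥ log ((π σ l)⁻¹) - 1 - log L
  have hflog : ∀ l a, Real.log (f l a) = Real.log ((π * σ l)⁻¹) - (σ l)⁻¹ * ‖a‖^2 := by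
    intro l a
    rw [hf' l a, Real.log_mul (ne_of_gt (inv_pos.mpr (mul_pos pi_pos (hσ l))))
      (Real.exp_ne_zero _), Real.log_exp]; ring
  have hIge : ∀ l, Real.log ((π * σ l)⁻¹) - Real.log L - 1
      ≤ ∫ a : ℂ, f l a * Real.log (fA a) := by
    intro l
    have hpt : ∀ a : ℂ, f l a * (Real.log (f l a) - Real.log L) ≤ f l a * Real.log (fA a) := by
      intro a
      refine mul_le_mul_of_nonneg_left ?_ (hfpos l a).le
      have h1 : (1/(L:ℝ)) * f l a ≤ fA a := by
        rw [hfA]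
        exact mul_le_mul_of_nonneg_left
          (Finset.single_le_sum (fun t _ => (hfpos t a).le) (Finset.mem_univ l)) (by positivity)
      calc Real.log (f l a) - Real.log L = Real.log ((1/(L:ℝ)) * f l a) := by
            rw [Real.log_mul (ne_of_gt (one_div_pos.mpr hLR)) (ne_of_gt (hfpos l a)), one_div,
              Real.log_inv]; ring
        _ ≤ Real.log (fA a) :=
            Real.log_le_log (mul_pos (one_div_pos.mpr hLR) (hfpos l a)) h1
    have hfun : (fun a : ℂ => f l a * (Real.log (f l a) - Real.log L)) =
        fun a : ℂ => (Real.log ((π*σ l)⁻¹) - Real.log L) * f l a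
          - ((σ l)⁻¹ * (π * σ l)⁻¹) * (‖a‖^2 * rexp (-(σ l)⁻¹ * ‖a‖^2)) := by
      funext a; rw [hflog l a, hf' l a]; ring
    have hintL : Integrable (fun a : ℂ => f l a * (Real.log (f l a) - Real.log L)) := by
      rw [hfun]
      exact ((hfint l).const_mul _).sub ((eaux_integrable_sq_gauss (hbl l)).const_mul _)
    have hval : ∫ a : ℂ, f l a * (Real.log (f l a) - Real.log L)
        = Real.log ((π*σ l)⁻¹) - Real.log L - 1 := by
      rw [hfun, integral_sub ((hfint l).const_mul _)
        ((eaux_integrable_sq_gauss (hbl l)).const_mul _),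
        integral_const_mul, integral_const_mul, hfone l, eaux_integral_sq_gauss (hbl l)]
      have h4 : (σ l)⁻¹ * (π * σ l)⁻¹ * (π / ((σ l)⁻¹)^2) = 1 := by
        have h1 : π ≠ 0 := pi_ne_zero
        have h2 : σ l ≠ 0 := ne_of_gt (hσ l)
        field_simp
      rw [h4]; ring
    have := integral_mono hintL (hintI l) hpt
    rw [hval] at this
    linarith
  -- assemble
  set G : ℝ := ∫ a : ℂ, fA a * Real.log (fA a) with hG
  set T : Fin L → ℝ := fun l => ∑ t, 1 / (σ l + σ t) with hT
  have hTpos : ∀ l, 0 < T l := fun l =>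
    Finset.sum_pos (fun t _ => one_div_pos.mpr (add_pos (hσ l) (hσ t)))
      ⟨l₀, Finset.mem_univ _⟩
  have hST : ∀ l, (1/(L:ℝ)) * S l = (π * (L:ℝ))⁻¹ * T l := by
    intro l
    rw [hS, hT, Finset.mul_sum, Finset.mul_sum]
    congr 1; funext t
    rw [one_div, mul_inv, mul_inv]
    ring
  have hlogS : ∀ l, Real.log ((1/(L:ℝ)) * S l) = Real.log (T l) - Real.log (π * (L:ℝ)) := by
    intro l
    rw [hST l, Real.log_mul (by positivity) (ne_of_gt (hTpos l)), Real.log_inv]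
    ring
  have hE1 : Real.log (π * (L:ℝ)) - (1/(L:ℝ)) * ∑ l, Real.log (T l) ≤ -G := by
    have h1 : G ≤ (1/(L:ℝ)) * ∑ l, Real.log ((1/(L:ℝ)) * S l) := by
      rw [hGdecomp]
      exact mul_le_mul_of_nonneg_left (Finset.sum_le_sum fun l _ => hIle l) (by positivity)
    have h2 : (1/(L:ℝ)) * ∑ l, Real.log ((1/(L:ℝ)) * S l)
        = (1/(L:ℝ)) * ∑ l, Real.log (T l) - Real.log (π * (L:ℝ)) := by
      simp_rw [hlogS]
      rw [Finset.sum_sub_distrib, Finset.sum_const, Finset.card_univ, Fintype.card_fin,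
        mul_sub, nsmul_eq_mul]
      congr 1
      field_simp
    linarith
  have hE2 : -G ≤ Real.log (π * Real.exp 1 * (L:ℝ)) + (1/(L:ℝ)) * ∑ l, Real.log (σ l) := by
    have h1 : (1/(L:ℝ)) * ∑ l, (Real.log ((π * σ l)⁻¹) - Real.log L - 1) ≤ G := by
      rw [hGdecomp]
      exact mul_le_mul_of_nonneg_left (Finset.sum_le_sum fun l _ => hIge l) (by positivity)
    have h2 : (1/(L:ℝ)) * ∑ l, (Real.log ((π * σ l)⁻¹) - Real.log L - 1)
        = -(Real.log (π * Real.exp 1 * (L:ℝ)) + (1/(L:ℝ)) * ∑ l, Real.log (σ l)) := by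
      have hlogterm : ∀ l, Real.log ((π * σ l)⁻¹) - Real.log L - 1
          = -Real.log (σ l) - (Real.log π + Real.log (L:ℝ) + 1) := by
        intro l
        rw [Real.log_inv, Real.log_mul pi_ne_zero (ne_of_gt (hσ l))]; ring
      simp_rw [hlogterm]
      rw [Finset.sum_sub_distrib, Finset.sum_const, Finset.card_univ, Fintype.card_fin,
        nsmul_eq_mul, Real.log_mul (by positivity) (ne_of_gt hLR),
        Real.log_mul pi_ne_zero (ne_of_gt (Real.exp_pos 1)), Real.log_exp]
      rw [Finset.sum_neg_distrib]
      field_simp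
      ring
    linarith
  -- convert to logb
  have hconv : ∫ a : ℂ, fA a * Real.logb 2 (fA a) = G / Real.log 2 := by
    rw [hG]
    simp_rw [Real.logb, mul_div_assoc']
    rw [integral_div]
  have hlog2 : (0:ℝ) < Real.log 2 := Real.log_pos one_lt_two
  simp only [hT] at hE1
  constructor
  · rw [ge_iff_le, hconv, neg_div']
    simp only [Real.logb]
    calc Real.log (π * (L:ℝ)) / Real.log 2
          - (1/(L:ℝ)) * ∑ l, Real.log (∑ t, 1 / (σ l + σ t)) / Real.log 2
        = (Real.log (π * (L:ℝ))
          - (1/(L:ℝ)) * ∑ l, Real.log (∑ t, 1 / (σ l + σ t))) / Real.log 2 := by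
          rw [← Finset.sum_div, sub_div, mul_div_assoc]
      _ ≤ -G / Real.log 2 := by gcongr
  · rw [hconv, neg_div']
    simp only [Real.logb]
    calc -G / Real.log 2
        ≤ (Real.log (π * Real.exp 1 * (L:ℝ)) + (1/(L:ℝ)) * ∑ l, Real.log (σ l)) / Real.log 2 := by
          gcongr
      _ = Real.log (π * Real.exp 1 * (L:ℝ)) / Real.log 2
          + (1/(L:ℝ)) * ∑ l, Real.log (σ l) / Real.log 2 := by
          rw [← Finset.sum_div, add_div, mul_div_assoc]
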